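/- For every integer n ≥ 3, every 1/2-derivation of the Schrödinger algebra S_n is trivial, i.e. is a scalar multiple of the identity map. -/

import Mathlib

noncomputable section

open Submodule

/-- Index type for the standard basis
`{e, f, h, z, x_i, y_i (1 ≤ i ≤ n), s_{jk} (1 ≤ j < k ≤ n)}`
of the Schrödinger algebra `S_n` (indices shifted to start from `0`). -/
inductive SIdx (n : ℕ) : Type where
  | E : SIdx n
  | F : SIdx n
  | H : SIdx n
  | Z : SIdx n
  | X : Fin n → SIdx n
  | Y : Fin n → SIdx n
  | S : (j k : Fin n) → j < k → SIdx n

/-- Kronecker delta with values in `ℂ`. -/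
def kd {n : ℕ} (i j : Fin n) : ℂ := if i = j then 1 else 0

variable {n : ℕ} {L : Type*} [LieRing L] [LieAlgebra ℂ L]

/-- The element `s_{jk}` for arbitrary indices, with the convention
`s_{kj} = -s_{jk}` and `s_{jj} = 0`. -/
def sg (b : Module.Basis (SIdx n) ℂ L) (j k : Fin n) : L :=
  if h : j < k then b (.S j k h)
  else if h' : k < j then - b (.S k j h')
  else 0

/-- A basis of a complex Lie algebra indexed by `SIdx n` realizes the
Schrödinger algebra `S_n` if the brackets of basis vectors are as follows
(all brackets of basis vectors not determined by the relations below and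
anticommutativity are zero). -/
structure IsSchrodinger (b : Module.Basis (SIdx n) ℂ L) : Prop where
  lie_e_f : ⁅b .E, b .F⁆ = b .H
  lie_h_e : ⁅b .H, b .E⁆ = (2 : ℂ) • b .E
  lie_f_h : ⁅b .F, b .H⁆ = (2 : ℂ) • b .F
  lie_x_y : ∀ i j, ⁅b (.X i), b (.Y j)⁆ = kd i j • b .Z
  lie_x_x : ∀ i j, ⁅b (.X i), b (.X j)⁆ = 0
  lie_y_y : ∀ i j, ⁅b (.Y i), b (.Y j)⁆ = 0
  lie_h_x : ∀ i, ⁅b .H, b (.X i)⁆ = b (.X i)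
  lie_h_y : ∀ i, ⁅b .H, b (.Y i)⁆ = - b (.Y i)
  lie_e_y : ∀ i, ⁅b .E, b (.Y i)⁆ = b (.X i)
  lie_e_x : ∀ i, ⁅b .E, b (.X i)⁆ = 0
  lie_f_x : ∀ i, ⁅b .F, b (.X i)⁆ = b (.Y i)
  lie_f_y : ∀ i, ⁅b .F, b (.Y i)⁆ = 0
  lie_z : ∀ u : SIdx n, ⁅b .Z, b u⁆ = 0
  lie_s_x : ∀ j k i, ⁅sg b j k, b (.X i)⁆ = kd k i • b (.X j) - kd j i • b (.X k)
  lie_s_y : ∀ j k i, ⁅sg b j k, b (.Y i)⁆ = kd k i • b (.Y j) - kd j i • b (.Y k)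
  lie_s_s : ∀ j k l m, ⁅sg b j k, sg b l m⁆ =
      kd l k • sg b j m + kd j m • sg b k l + kd m k • sg b l j + kd l j • sg b m k
  lie_e_s : ∀ j k, ⁅b .E, sg b j k⁆ = 0
  lie_f_s : ∀ j k, ⁅b .F, sg b j k⁆ = 0
  lie_h_s : ∀ j k, ⁅b .H, sg b j k⁆ = 0

/-- A `1/2`-derivation of a complex Lie algebra: a linear map `φ` with
`φ([x,y]) = (1/2)([φ(x),y] + [x,φ(y)])`. -/
def IsHalfDeriv (φ : L →ₗ[ℂ] L) : Prop :=
  ∀ x y : L, φ ⁅x, y⁆ = (2⁻¹ : ℂ) • (⁅φ x, y⁆ + ⁅x, φ y⁆)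

/-- The set of basis vectors spanning the even part `(S_n)₀`:
`{e, f, h, z, s_{kl}}`. -/
def evenSet (b : Module.Basis (SIdx n) ℂ L) : Set L :=
  {v | v = b .E ∨ v = b .F ∨ v = b .H ∨ v = b .Z ∨ ∃ j k, ∃ h : j < k, v = b (.S j k h)}

/-- The set of basis vectors spanning the odd part `(S_n)₁`: `{x_i, y_i}`. -/
def oddSet (b : Module.Basis (SIdx n) ℂ L) : Set L :=
  {v | ∃ i : Fin n, v = b (.X i) ∨ v = b (.Y i)}

section Infra

variable {n : ℕ} {L : Type*} [LieRing L] [LieAlgebra ℂ L]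

open Classical in
lemma schr_repr_basis (b : Module.Basis (SIdx n) ℂ L) (w v : SIdx n) :
    b.repr (b w) v = if w = v then 1 else 0 := by
  rw [b.repr_self, Finsupp.single_apply]

def schrMu {n : ℕ} : SIdx n → ℂ
  | .E => 2 | .F => -2 | .H => 0 | .Z => 0 | .X _ => 1 | .Y _ => -1 | .S _ _ _ => 0

def schrCo (b : Module.Basis (SIdx n) ℂ L) (v : SIdx n) : L →ₗ[ℂ] ℂ :=
  Finsupp.lapply v ∘ₗ b.repr.toLinearMap

@[simp] lemma schrCo_apply (b : Module.Basis (SIdx n) ℂ L) (v : SIdx n) (x : L) :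
    schrCo b v x = b.repr x v := rfl

def schrCs (b : Module.Basis (SIdx n) ℂ L) (p q : Fin n) : L →ₗ[ℂ] ℂ :=
  if h : p < q then schrCo b (.S p q h)
  else if h' : q < p then - schrCo b (.S q p h') else 0

lemma schr_repr_lie (b : Module.Basis (SIdx n) ℂ L) (a : L) (v : SIdx n) (g : L →ₗ[ℂ] ℂ)
    (hg : ∀ w, b.repr ⁅a, b w⁆ v = g (b w)) (x : L) :
    b.repr ⁅a, x⁆ v = g x := by
  have h : (schrCo b v ∘ₗ (LieAlgebra.ad ℂ L a : L →ₗ[ℂ] L)) = g :=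
    Module.Basis.ext b (fun w => by simpa using hg w)
  have := LinearMap.congr_fun h x
  simpa using this

lemma sg_lt (b : Module.Basis (SIdx n) ℂ L) {j k : Fin n} (h : j < k) :
    sg b j k = b (.S j k h) := dif_pos h

lemma sg_gt (b : Module.Basis (SIdx n) ℂ L) {j k : Fin n} (h : k < j) :
    sg b j k = - b (.S k j h) := by
  rw [sg, dif_neg (asymm h), dif_pos h]

lemma sg_diag (b : Module.Basis (SIdx n) ℂ L) (j : Fin n) : sg b j j = 0 := by
  rw [sg, dif_neg (lt_irrefl j), dif_neg (lt_irrefl j)]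

lemma SIdx_S_eq_iff {n : ℕ} {j k l m : Fin n} (h1 : j < k) (h2 : l < m) :
    (SIdx.S j k h1 = SIdx.S l m h2) ↔ (j = l ∧ k = m) :=
  ⟨fun h => by injection h with a c; exact ⟨a, c⟩,
   fun ⟨a, c⟩ => by subst a; subst c; rfl⟩

end Infra

section Tables

variable {n : ℕ} {L : Type*} [LieRing L] [LieAlgebra ℂ L]
variable (b : Module.Basis (SIdx n) ℂ L) (hb : IsSchrodinger b)
include hb

lemma lie_E_table (w : SIdx n) : ⁅b .E, b w⁆ =
    (match w with
     | .F => b .H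
     | .H => (-2 : ℂ) • b .E
     | .Y i => b (.X i)
     | _ => 0) := by
  cases w with
  | E => exact lie_self _
  | F => exact hb.lie_e_f
  | H => rw [← lie_skew, hb.lie_h_e, neg_smul]
  | Z => rw [← lie_skew, hb.lie_z, neg_zero]
  | X i => exact hb.lie_e_x i
  | Y i => exact hb.lie_e_y i
  | S j k h => rw [← sg_lt b h]; exact hb.lie_e_s j k

lemma lie_F_table (w : SIdx n) : ⁅b .F, b w⁆ =
    (match w with
     | .E => - b .H
     | .H => (2 : ℂ) • b .F
     | .X i => b (.Y i)
     | _ => 0) := by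
  cases w with
  | E => rw [← lie_skew, hb.lie_e_f]
  | F => exact lie_self _
  | H => exact hb.lie_f_h
  | Z => rw [← lie_skew, hb.lie_z, neg_zero]
  | X i => exact hb.lie_f_x i
  | Y i => exact hb.lie_f_y i
  | S j k h => rw [← sg_lt b h]; exact hb.lie_f_s j k

lemma lie_H_table (w : SIdx n) : ⁅b .H, b w⁆ = schrMu w • b w := by
  cases w with
  | E => rw [hb.lie_h_e]; rfl
  | F => rw [← lie_skew, hb.lie_f_h]; show -((2:ℂ) • b .F) = _; rw [← neg_smul]; rfl
  | H => rw [lie_self]; show (0:L) = (0:ℂ) • b .H; rw [zero_smul]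
  | Z => rw [← lie_skew, hb.lie_z, neg_zero]; show (0:L) = (0:ℂ) • b .Z; rw [zero_smul]
  | X i => rw [hb.lie_h_x]; show b (.X i) = (1:ℂ) • b (.X i); rw [one_smul]
  | Y i => rw [hb.lie_h_y, ← neg_one_smul ℂ]; rfl
  | S j k h => rw [← sg_lt b h, hb.lie_h_s]; show (0:L) = (0:ℂ) • sg b j k; rw [zero_smul]

lemma lie_X_table (i : Fin n) (w : SIdx n) : ⁅b (.X i), b w⁆ =
    (match w with
     | .F => - b (.Y i)
     | .H => - b (.X i)
     | .Y j => kd i j • b .Z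
     | .S l m _ => kd l i • b (.X m) - kd m i • b (.X l)
     | _ => 0) := by
  cases w with
  | E => rw [← lie_skew, hb.lie_e_x, neg_zero]
  | F => rw [← lie_skew, hb.lie_f_x]
  | H => rw [← lie_skew, hb.lie_h_x]
  | Z => rw [← lie_skew, hb.lie_z, neg_zero]
  | X j => exact hb.lie_x_x i j
  | Y j => exact hb.lie_x_y i j
  | S l m h => rw [← sg_lt b h, ← lie_skew, hb.lie_s_x]; show _ = kd l i • b (.X m) - kd m i • b (.X l); rw [neg_sub]

lemma lie_Z_any (w : L) : ⁅b .Z, w⁆ = 0 := by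
  have h : (LieAlgebra.ad ℂ L (b .Z) : L →ₗ[ℂ] L) = 0 :=
    Module.Basis.ext b (fun u => by simpa using hb.lie_z u)
  simpa using LinearMap.congr_fun h w

lemma lie_any_Z (w : L) : ⁅w, b .Z⁆ = 0 := by
  rw [← lie_skew, lie_Z_any b hb, neg_zero]

end Tables

section Reprs

variable {n : ℕ} {L : Type*} [LieRing L] [LieAlgebra ℂ L]
variable (b : Module.Basis (SIdx n) ℂ L) (hb : IsSchrodinger b)
include hb

lemma reprH_all (v : SIdx n) (x : L) :
    b.repr ⁅b .H, x⁆ v = schrMu v * b.repr x v := by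
  have := schr_repr_lie b (b .H) v (schrMu v • schrCo b v) (fun w => by
    rw [lie_H_table b hb]
    rcases eq_or_ne w v with rfl | hne
    · simp [schr_repr_basis]
    · simp [schr_repr_basis, hne]) x
  simpa using this

lemma reprE_E (x : L) : b.repr ⁅b .E, x⁆ .E = -2 * b.repr x .H := by
  have := schr_repr_lie b (b .E) .E ((-2 : ℂ) • schrCo b .H) (fun w => by
    rw [lie_E_table b hb]; cases w <;> simp [schr_repr_basis]) x
  simpa using this

lemma reprE_F (x : L) : b.repr ⁅b .E, x⁆ .F = 0 := by
  have := schr_repr_lie b (b .E) .F (0 : L →ₗ[ℂ] ℂ) (fun w => by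
    rw [lie_E_table b hb]; cases w <;> simp [schr_repr_basis]) x
  simpa using this

lemma reprE_H (x : L) : b.repr ⁅b .E, x⁆ .H = b.repr x .F := by
  have := schr_repr_lie b (b .E) .H (schrCo b .F) (fun w => by
    rw [lie_E_table b hb]; cases w <;> simp [schr_repr_basis]) x
  simpa using this

lemma reprE_Z (x : L) : b.repr ⁅b .E, x⁆ .Z = 0 := by
  have := schr_repr_lie b (b .E) .Z (0 : L →ₗ[ℂ] ℂ) (fun w => by
    rw [lie_E_table b hb]; cases w <;> simp [schr_repr_basis]) x
  simpa using this

lemma reprE_X (i : Fin n) (x : L) : b.repr ⁅b .E, x⁆ (.X i) = b.repr x (.Y i) := by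
  have := schr_repr_lie b (b .E) (.X i) (schrCo b (.Y i)) (fun w => by
    rw [lie_E_table b hb]
    cases w with
    | Y j => rcases eq_or_ne j i with rfl | hne
             · simp [schr_repr_basis]
             · simp [schr_repr_basis, hne]
    | _ => simp [schr_repr_basis]) x
  simpa using this

lemma reprE_Y (i : Fin n) (x : L) : b.repr ⁅b .E, x⁆ (.Y i) = 0 := by
  have := schr_repr_lie b (b .E) (.Y i) (0 : L →ₗ[ℂ] ℂ) (fun w => by
    rw [lie_E_table b hb]; cases w <;> simp [schr_repr_basis]) x
  simpa using this

lemma reprE_S (j k : Fin n) (h : j < k) (x : L) : b.repr ⁅b .E, x⁆ (.S j k h) = 0 := by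
  have := schr_repr_lie b (b .E) (.S j k h) (0 : L →ₗ[ℂ] ℂ) (fun w => by
    rw [lie_E_table b hb]; cases w <;> simp [schr_repr_basis]) x
  simpa using this

lemma reprF_E (x : L) : b.repr ⁅b .F, x⁆ .E = 0 := by
  have := schr_repr_lie b (b .F) .E (0 : L →ₗ[ℂ] ℂ) (fun w => by
    rw [lie_F_table b hb]; cases w <;> simp [schr_repr_basis]) x
  simpa using this

lemma reprF_F (x : L) : b.repr ⁅b .F, x⁆ .F = 2 * b.repr x .H := by
  have := schr_repr_lie b (b .F) .F ((2 : ℂ) • schrCo b .H) (fun w => by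
    rw [lie_F_table b hb]; cases w <;> simp [schr_repr_basis]) x
  simpa using this

lemma reprF_H (x : L) : b.repr ⁅b .F, x⁆ .H = - b.repr x .E := by
  have := schr_repr_lie b (b .F) .H (- schrCo b .E) (fun w => by
    rw [lie_F_table b hb]; cases w <;> simp [schr_repr_basis]) x
  simpa using this

lemma reprF_Z (x : L) : b.repr ⁅b .F, x⁆ .Z = 0 := by
  have := schr_repr_lie b (b .F) .Z (0 : L →ₗ[ℂ] ℂ) (fun w => by
    rw [lie_F_table b hb]; cases w <;> simp [schr_repr_basis]) x
  simpa using this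

lemma reprF_X (i : Fin n) (x : L) : b.repr ⁅b .F, x⁆ (.X i) = 0 := by
  have := schr_repr_lie b (b .F) (.X i) (0 : L →ₗ[ℂ] ℂ) (fun w => by
    rw [lie_F_table b hb]; cases w <;> simp [schr_repr_basis]) x
  simpa using this

lemma reprF_Y (i : Fin n) (x : L) : b.repr ⁅b .F, x⁆ (.Y i) = b.repr x (.X i) := by
  have := schr_repr_lie b (b .F) (.Y i) (schrCo b (.X i)) (fun w => by
    rw [lie_F_table b hb]
    cases w with
    | X j => rcases eq_or_ne j i with rfl | hne
             · simp [schr_repr_basis]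
             · simp [schr_repr_basis, hne]
    | _ => simp [schr_repr_basis]) x
  simpa using this

lemma reprF_S (j k : Fin n) (h : j < k) (x : L) : b.repr ⁅b .F, x⁆ (.S j k h) = 0 := by
  have := schr_repr_lie b (b .F) (.S j k h) (0 : L →ₗ[ℂ] ℂ) (fun w => by
    rw [lie_F_table b hb]; cases w <;> simp [schr_repr_basis]) x
  simpa using this

omit hb in
lemma schrCs_basis (p q : Fin n) (w : SIdx n) :
    schrCs b p q (b w) = (match w with
      | .S l m _ => (if p = l ∧ q = m then (1:ℂ) else 0) - (if q = l ∧ p = m then 1 else 0)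
      | _ => 0) := by
  classical
  cases w with
  | S l m hlm =>
    unfold schrCs
    split_ifs with h1 h2
    · have e1 : (SIdx.S l m hlm = SIdx.S p q h1) ↔ (p = l ∧ q = m) := by
        constructor
        · intro h; injection h with a c; exact ⟨a.symm, c.symm⟩
        · rintro ⟨rfl, rfl⟩; rfl
      have e2 : ¬(q = l ∧ p = m) := by rintro ⟨rfl, rfl⟩; exact absurd hlm (lt_asymm h1)
      simp only [schrCo_apply, schr_repr_basis]
      rw [if_congr e1 rfl rfl, if_neg e2, sub_zero]
    · have e1 : (SIdx.S l m hlm = SIdx.S q p h2) ↔ (q = l ∧ p = m) := by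
        constructor
        · intro h; injection h with a c; exact ⟨a.symm, c.symm⟩
        · rintro ⟨rfl, rfl⟩; rfl
      have e2 : ¬(p = l ∧ q = m) := by rintro ⟨rfl, rfl⟩; exact absurd hlm (lt_asymm h2)
      simp only [LinearMap.neg_apply, schrCo_apply, schr_repr_basis]
      rw [if_congr e1 rfl rfl, if_neg e2, zero_sub]
    · have e2 : ¬(p = l ∧ q = m) := by rintro ⟨rfl, rfl⟩; exact h1 hlm
      have e3 : ¬(q = l ∧ p = m) := by rintro ⟨rfl, rfl⟩; exact h2 hlm
      simp only [LinearMap.zero_apply]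
      rw [if_neg e2, if_neg e3, sub_zero]
  | E => unfold schrCs; split_ifs <;> simp [schr_repr_basis]
  | F => unfold schrCs; split_ifs <;> simp [schr_repr_basis]
  | H => unfold schrCs; split_ifs <;> simp [schr_repr_basis]
  | Z => unfold schrCs; split_ifs <;> simp [schr_repr_basis]
  | X j => unfold schrCs; split_ifs <;> simp [schr_repr_basis]
  | Y j => unfold schrCs; split_ifs <;> simp [schr_repr_basis]

lemma reprX_X (i p : Fin n) (x : L) :
    b.repr ⁅b (.X i), x⁆ (.X p) = -(kd i p * b.repr x .H) - schrCs b p i x := by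
  have := schr_repr_lie b (b (.X i)) (.X p) (-(kd i p) • schrCo b .H - schrCs b p i) (fun w => by
    rw [lie_X_table b hb]
    simp only [LinearMap.sub_apply, LinearMap.smul_apply, schrCo_apply, schrCs_basis b,
      smul_eq_mul]
    cases w with
    | S l m hlm =>
      simp only [map_sub, map_smul, Finsupp.sub_apply, Finsupp.smul_apply, schr_repr_basis,
        smul_eq_mul, kd]
      by_cases h1 : l = i <;> by_cases h2 : m = p <;> by_cases h3 : m = i <;>
        by_cases h4 : l = p <;> simp_all [lt_self_iff_false] <;> simp_all [eq_comm]
    | H =>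
      simp only [map_neg, Finsupp.neg_apply, schr_repr_basis, kd, SIdx.X.injEq]
      split_ifs <;> norm_num
    | Y j =>
      simp only [map_smul, Finsupp.smul_apply, schr_repr_basis, smul_eq_mul, kd, SIdx.X.injEq]
      split_ifs <;> simp_all
    | _ => simp [schr_repr_basis]) x
  simpa using this

end Reprs

set_option maxHeartbeats 2000000 in
/-- For every `n ≥ 3`, every `1/2`-derivation of the
Schrödinger algebra `S_n` is trivial, i.e. a scalar multiple of the identity. -/
theorem half_derivations_trivial_of_three_le (n : ℕ) (hn : 3 ≤ n)
    (L : Type*) [LieRing L] [LieAlgebra ℂ L]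
    (b : Module.Basis (SIdx n) ℂ L) (hb : IsSchrodinger b)
    (φ : L →ₗ[ℂ] L) (hφ : IsHalfDeriv φ) :
    ∃ c : ℂ, φ = c • LinearMap.id := by
  classical
  set α := b.repr (φ (b .H)) .H with hα
  -- master component equations for the sl2-triple
  have cEF : ∀ v, b.repr (φ (b .H)) v =
      2⁻¹ * (-(b.repr ⁅b .F, φ (b .E)⁆ v) + b.repr ⁅b .E, φ (b .F)⁆ v) := by
    intro v
    have h := hφ (b .E) (b .F)
    rw [hb.lie_e_f, ← lie_skew (φ (b .E)) (b .F)] at h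
    have h2 := congrArg (fun y => b.repr y v) h
    simp only [map_smul, map_add, map_neg, Finsupp.smul_apply, Finsupp.add_apply,
      Finsupp.neg_apply, smul_eq_mul] at h2
    exact h2
  have cHE : ∀ v, 2 * b.repr (φ (b .E)) v =
      2⁻¹ * (-(b.repr ⁅b .E, φ (b .H)⁆ v) + schrMu v * b.repr (φ (b .E)) v) := by
    intro v
    have h := hφ (b .H) (b .E)
    rw [hb.lie_h_e, ← lie_skew (φ (b .H)) (b .E), map_smul] at h
    have h2 := congrArg (fun y => b.repr y v) h
    simp only [map_smul, map_add, map_neg, Finsupp.smul_apply, Finsupp.add_apply,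
      Finsupp.neg_apply, smul_eq_mul] at h2
    rw [reprH_all b hb] at h2
    exact h2
  have cFH : ∀ v, 2 * b.repr (φ (b .F)) v =
      2⁻¹ * (-(schrMu v * b.repr (φ (b .F)) v) + b.repr ⁅b .F, φ (b .H)⁆ v) := by
    intro v
    have h := hφ (b .F) (b .H)
    rw [hb.lie_f_h, ← lie_skew (φ (b .F)) (b .H), map_smul] at h
    have h2 := congrArg (fun y => b.repr y v) h
    simp only [map_smul, map_add, map_neg, Finsupp.smul_apply, Finsupp.add_apply,
      Finsupp.neg_apply, smul_eq_mul] at h2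
    rw [reprH_all b hb] at h2
    exact h2
  -- components of φ e
  have haF : b.repr (φ (b .E)) .F = 0 := by
    have h := cHE .F; rw [reprE_F b hb] at h; simp only [schrMu] at h
    linear_combination h / 3
  have haZ : b.repr (φ (b .E)) .Z = 0 := by
    have h := cHE .Z; rw [reprE_Z b hb] at h; simp only [schrMu] at h
    linear_combination h / 2
  have haY : ∀ i, b.repr (φ (b .E)) (.Y i) = 0 := by
    intro i
    have h := cHE (.Y i); rw [reprE_Y b hb] at h; simp only [schrMu] at h
    linear_combination h * 2 / 5
  have haS : ∀ j k (hjk : j < k), b.repr (φ (b .E)) (.S j k hjk) = 0 := by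
    intro j k hjk
    have h := cHE (.S j k hjk); rw [reprE_S b hb] at h; simp only [schrMu] at h
    linear_combination h / 2
  have haH : b.repr (φ (b .E)) .H = 0 := by
    have h := cHE .H; rw [reprE_H b hb] at h; simp only [schrMu] at h
    have h2 := cEF .F; rw [reprF_F b hb, reprE_F b hb] at h2
    linear_combination (2/3) * h - (1/3) * h2
  have haX : ∀ i, b.repr (φ (b .E)) (.X i) = 0 := by
    intro i
    have h := cHE (.X i); rw [reprE_X b hb] at h; simp only [schrMu] at h
    have h2 := cEF (.Y i); rw [reprF_Y b hb, reprE_Y b hb] at h2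
    linear_combination (4/5) * h - (2/5) * h2
  have haE : b.repr (φ (b .E)) .E = α := by
    have h := cHE .E; rw [reprE_E b hb] at h; simp only [schrMu] at h
    rw [hα]; linear_combination h
  -- components of φ f
  have hbE : b.repr (φ (b .F)) .E = 0 := by
    have h := cFH .E; rw [reprF_E b hb] at h; simp only [schrMu] at h
    linear_combination h / 3
  have hbZ : b.repr (φ (b .F)) .Z = 0 := by
    have h := cFH .Z; rw [reprF_Z b hb] at h; simp only [schrMu] at h
    linear_combination h / 2
  have hbX : ∀ i, b.repr (φ (b .F)) (.X i) = 0 := by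
    intro i
    have h := cFH (.X i); rw [reprF_X b hb] at h; simp only [schrMu] at h
    linear_combination h * 2 / 5
  have hbS : ∀ j k (hjk : j < k), b.repr (φ (b .F)) (.S j k hjk) = 0 := by
    intro j k hjk
    have h := cFH (.S j k hjk); rw [reprF_S b hb] at h; simp only [schrMu] at h
    linear_combination h / 2
  have hbH : b.repr (φ (b .F)) .H = 0 := by
    have h := cFH .H; rw [reprF_H b hb] at h; simp only [schrMu] at h
    have h2 := cEF .E; rw [reprF_E b hb, reprE_E b hb] at h2
    linear_combination (2/3) * h - (1/3) * h2
  have hbY : ∀ i, b.repr (φ (b .F)) (.Y i) = 0 := by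
    intro i
    have h := cFH (.Y i); rw [reprF_Y b hb] at h; simp only [schrMu] at h
    have h2 := cEF (.X i); rw [reprF_X b hb, reprE_X b hb] at h2
    linear_combination (4/5) * h + (2/5) * h2
  have hbF : b.repr (φ (b .F)) .F = α := by
    have h := cFH .F; rw [reprF_F b hb] at h; simp only [schrMu] at h
    rw [hα]; linear_combination h
  -- reconstruction of φ on the sl2-triple
  have phiE : φ (b .E) = α • b .E := by
    refine Module.Basis.ext_elem b fun v => ?_
    cases v with
    | E => simpa [schr_repr_basis, Finsupp.add_apply, Finsupp.smul_apply, Finsupp.sub_apply] using haE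
    | F => simpa [schr_repr_basis, Finsupp.add_apply, Finsupp.smul_apply, Finsupp.sub_apply] using haF
    | H => simpa [schr_repr_basis, Finsupp.add_apply, Finsupp.smul_apply, Finsupp.sub_apply] using haH
    | Z => simpa [schr_repr_basis, Finsupp.add_apply, Finsupp.smul_apply, Finsupp.sub_apply] using haZ
    | X i => simpa [schr_repr_basis, Finsupp.add_apply, Finsupp.smul_apply, Finsupp.sub_apply] using haX i
    | Y i => simpa [schr_repr_basis, Finsupp.add_apply, Finsupp.smul_apply, Finsupp.sub_apply] using haY i
    | S j k hjk => simpa [schr_repr_basis, Finsupp.add_apply, Finsupp.smul_apply, Finsupp.sub_apply] using haS j k hjk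
  have phiF : φ (b .F) = α • b .F := by
    refine Module.Basis.ext_elem b fun v => ?_
    cases v with
    | E => simpa [schr_repr_basis, Finsupp.add_apply, Finsupp.smul_apply, Finsupp.sub_apply] using hbE
    | F => simpa [schr_repr_basis, Finsupp.add_apply, Finsupp.smul_apply, Finsupp.sub_apply] using hbF
    | H => simpa [schr_repr_basis, Finsupp.add_apply, Finsupp.smul_apply, Finsupp.sub_apply] using hbH
    | Z => simpa [schr_repr_basis, Finsupp.add_apply, Finsupp.smul_apply, Finsupp.sub_apply] using hbZ
    | X i => simpa [schr_repr_basis, Finsupp.add_apply, Finsupp.smul_apply, Finsupp.sub_apply] using hbX i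
    | Y i => simpa [schr_repr_basis, Finsupp.add_apply, Finsupp.smul_apply, Finsupp.sub_apply] using hbY i
    | S j k hjk => simpa [schr_repr_basis, Finsupp.add_apply, Finsupp.smul_apply, Finsupp.sub_apply] using hbS j k hjk
  have phiH : φ (b .H) = α • b .H := by
    refine Module.Basis.ext_elem b fun v => ?_
    cases v with
    | E =>
      have h := cEF .E; rw [reprF_E b hb, reprE_E b hb, hbH] at h
      simpa [schr_repr_basis, Finsupp.add_apply, Finsupp.smul_apply, Finsupp.sub_apply] using h
    | F =>
      have h := cEF .F; rw [reprF_F b hb, reprE_F b hb, haH] at h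
      simpa [schr_repr_basis, Finsupp.add_apply, Finsupp.smul_apply, Finsupp.sub_apply] using h
    | H => simp [schr_repr_basis, ← hα]
    | Z =>
      have h := cEF .Z; rw [reprF_Z b hb, reprE_Z b hb] at h
      simpa [schr_repr_basis, Finsupp.add_apply, Finsupp.smul_apply, Finsupp.sub_apply] using h
    | X i =>
      have h := cEF (.X i); rw [reprF_X b hb, reprE_X b hb, hbY i] at h
      simpa [schr_repr_basis, Finsupp.add_apply, Finsupp.smul_apply, Finsupp.sub_apply] using h
    | Y i =>
      have h := cEF (.Y i); rw [reprF_Y b hb, reprE_Y b hb, haX i] at h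
      simpa [schr_repr_basis, Finsupp.add_apply, Finsupp.smul_apply, Finsupp.sub_apply] using h
    | S j k hjk =>
      have h := cEF (.S j k hjk); rw [reprF_S b hb, reprE_S b hb] at h
      simpa [schr_repr_basis, Finsupp.add_apply, Finsupp.smul_apply, Finsupp.sub_apply] using h
  -- phase 2 : the x_i, y_i, z
  have hXdec : ∀ i, φ (b (.X i)) = b.repr (φ (b (.X i))) .E • b .E + α • b (.X i) := by
    intro i
    have cHX : ∀ v, b.repr (φ (b (.X i))) v =
        2⁻¹ * (α * b.repr (b (.X i)) v + schrMu v * b.repr (φ (b (.X i))) v) := by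
      intro v
      have h := hφ (b .H) (b (.X i))
      rw [hb.lie_h_x, phiH, smul_lie, hb.lie_h_x] at h
      have h2 := congrArg (fun y => b.repr y v) h
      simp only [map_smul, map_add, Finsupp.smul_apply, Finsupp.add_apply, smul_eq_mul] at h2
      rw [reprH_all b hb] at h2
      exact h2
    refine Module.Basis.ext_elem b fun v => ?_
    cases v with
    | E => simp [schr_repr_basis, Finsupp.add_apply, Finsupp.smul_apply]
    | F =>
      have h := cHX .F; simp only [schrMu, schr_repr_basis] at h
      simp only [reduceCtorEq, if_false, mul_zero] at h
      simpa [schr_repr_basis, Finsupp.add_apply, Finsupp.smul_apply, Finsupp.sub_apply] using (by linear_combination h / 2 :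
        b.repr (φ (b (.X i))) .F = 0)
    | H =>
      have h := cHX .H; simp only [schrMu, schr_repr_basis] at h
      simp only [reduceCtorEq, if_false, mul_zero] at h
      simpa [schr_repr_basis, Finsupp.add_apply, Finsupp.smul_apply, Finsupp.sub_apply] using (by linear_combination h :
        b.repr (φ (b (.X i))) .H = 0)
    | Z =>
      have h := cHX .Z; simp only [schrMu, schr_repr_basis] at h
      simp only [reduceCtorEq, if_false, mul_zero] at h
      simpa [schr_repr_basis, Finsupp.add_apply, Finsupp.smul_apply, Finsupp.sub_apply] using (by linear_combination h :
        b.repr (φ (b (.X i))) .Z = 0)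
    | X j =>
      have h := cHX (.X j); simp only [schrMu] at h
      have : b.repr (φ (b (.X i))) (.X j) = α * b.repr (b (.X i)) (.X j) := by
        linear_combination 2 * h
      rw [this]
      simp [schr_repr_basis, Finsupp.single_apply, mul_ite, mul_one, mul_zero,
        Finsupp.add_apply, Finsupp.smul_apply]
    | Y j =>
      have h := cHX (.Y j); simp only [schrMu, schr_repr_basis] at h
      simp only [reduceCtorEq, if_false, mul_zero] at h
      simpa [schr_repr_basis, Finsupp.add_apply, Finsupp.smul_apply, Finsupp.sub_apply] using (by linear_combination h * 2 / 3 :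
        b.repr (φ (b (.X i))) (.Y j) = 0)
    | S l m hlm =>
      have h := cHX (.S l m hlm); simp only [schrMu, schr_repr_basis] at h
      simp only [reduceCtorEq, if_false, mul_zero] at h
      simpa [schr_repr_basis, Finsupp.add_apply, Finsupp.smul_apply, Finsupp.sub_apply] using (by linear_combination h :
        b.repr (φ (b (.X i))) (.S l m hlm) = 0)
  have lFE : ⁅b .F, b .E⁆ = -b .H := by rw [← lie_skew, hb.lie_e_f]
  have hYdec : ∀ i, φ (b (.Y i)) =
      α • b (.Y i) - (2⁻¹ * b.repr (φ (b (.X i))) .E) • b .H := by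
    intro i
    have h := hφ (b .F) (b (.X i))
    rw [hb.lie_f_x, phiF, smul_lie, hb.lie_f_x, hXdec i, lie_add, lie_smul, lie_smul,
      lFE, hb.lie_f_x] at h
    rw [h]; module
  have htzero : ∀ i, b.repr (φ (b (.X i))) .E = 0 := by
    intro i
    have h := hφ (b .H) (b (.Y i))
    rw [hb.lie_h_y, phiH, smul_lie, hb.lie_h_y, map_neg, hYdec i] at h
    have h2 := congrArg (fun y => b.repr y (SIdx.H : SIdx n)) h
    simp only [map_smul, map_add, map_neg, map_sub, Finsupp.smul_apply, Finsupp.add_apply,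
      Finsupp.neg_apply, Finsupp.sub_apply, smul_eq_mul] at h2
    rw [reprH_all b hb] at h2
    simp only [schrMu, schr_repr_basis, reduceCtorEq, if_false, mul_zero, zero_mul,
      if_true, mul_one] at h2
    linear_combination 2 * h2
  have phiX : ∀ i, φ (b (.X i)) = α • b (.X i) := by
    intro i; rw [hXdec i, htzero i]; simp
  have phiY : ∀ i, φ (b (.Y i)) = α • b (.Y i) := by
    intro i; rw [hYdec i, htzero i]; simp
  have phiZ : φ (b .Z) = α • b .Z := by
    have i0 : Fin n := ⟨0, by omega⟩
    have hk : kd i0 i0 = 1 := by simp [kd]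
    have h := hφ (b (.X i0)) (b (.Y i0))
    rw [hb.lie_x_y, phiX i0, phiY i0, smul_lie, lie_smul, hb.lie_x_y, hk, one_smul] at h
    rw [h]; module
  -- phase 3 : the s_{jk}
  have hSpart : ∀ j k (hjk : j < k), φ (b (.S j k hjk)) =
      α • b (.S j k hjk) + b.repr (φ (b (.S j k hjk))) .Z • b .Z := by
    intro j k hjk
    have hs : ⁅b .H, b (.S j k hjk)⁆ = 0 := by rw [← sg_lt b hjk]; exact hb.lie_h_s j k
    have h1 : ⁅b .H, φ (b (.S j k hjk))⁆ = 0 := by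
      have h := hφ (b .H) (b (.S j k hjk))
      rw [hs, map_zero, phiH, smul_lie, hs, smul_zero, zero_add] at h
      exact ((smul_eq_zero.mp h.symm).resolve_left (by norm_num))
    have hEcomp : ∀ v, schrMu v * b.repr (φ (b (.S j k hjk))) v = 0 := by
      intro v
      have h2 : b.repr ⁅b .H, φ (b (.S j k hjk))⁆ v = 0 := by rw [h1]; simp
      rw [reprH_all b hb] at h2; exact h2
    have hSH : b.repr (φ (b (.S j k hjk))) .H = 0 := by
      have hse : ⁅b .E, b (.S j k hjk)⁆ = 0 := by rw [← sg_lt b hjk]; exact hb.lie_e_s j k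
      have h := hφ (b .E) (b (.S j k hjk))
      rw [hse, map_zero, phiE, smul_lie, hse, smul_zero, zero_add] at h
      have h2 : ⁅b .E, φ (b (.S j k hjk))⁆ = 0 :=
        (smul_eq_zero.mp h.symm).resolve_left (by norm_num)
      have h3 : b.repr ⁅b .E, φ (b (.S j k hjk))⁆ .E = 0 := by rw [h2]; simp
      rw [reprE_E b hb] at h3
      linear_combination -h3 / 2
    have hSX : ∀ p i2, schrCs b p i2 (φ (b (.S j k hjk))) =
        α * (kd k i2 * b.repr (b (.X j)) (.X p) - kd j i2 * b.repr (b (.X k)) (.X p)) := by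
      intro p i2
      have hbr : ⁅b (.S j k hjk), b (.X i2)⁆ = kd k i2 • b (.X j) - kd j i2 • b (.X k) := by
        rw [← sg_lt b hjk]; exact hb.lie_s_x j k i2
      have h := hφ (b (.S j k hjk)) (b (.X i2))
      rw [hbr, map_sub, map_smul, map_smul, phiX j, phiX k, phiX i2, lie_smul, hbr,
        ← lie_skew (φ (b (.S j k hjk))) (b (.X i2))] at h
      have h3 := congrArg (fun y => b.repr y (SIdx.X p : SIdx n)) h
      simp only [map_sub, map_smul, map_add, map_neg, Finsupp.sub_apply, Finsupp.add_apply,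
        Finsupp.smul_apply, Finsupp.neg_apply, smul_eq_mul] at h3
      rw [reprX_X b hb, hSH] at h3
      linear_combination -2 * h3
    have hSS : ∀ l m (hlm : l < m), b.repr (φ (b (.S j k hjk))) (.S l m hlm) =
        α * b.repr (b (.S j k hjk)) (.S l m hlm) := by
      intro l m hlm
      have e : schrCs b l m = schrCo b (.S l m hlm) := by unfold schrCs; rw [dif_pos hlm]
      have h := hSX l m
      rw [e, schrCo_apply] at h
      rw [schr_repr_basis] at h ⊢
      rw [schr_repr_basis] at h
      rw [if_congr (SIdx_S_eq_iff hjk hlm) rfl rfl]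
      simp only [SIdx.X.injEq] at h ⊢
      by_cases hjl : j = l
      · by_cases hkm : k = m
        · subst hjl; subst hkm
          simpa [kd, hjk.ne] using h
        · subst hjl
          simpa [kd, hkm, hlm.ne] using h
      · by_cases hkm : k = m
        · subst hkm
          simpa [kd, hjl, hjk.ne, hlm.ne'] using h
        · by_cases hjm : j = m
          · by_cases hkl : k = l
            · exfalso; subst hjm; subst hkl; exact lt_irrefl _ (hjk.trans hlm)
            · simpa [kd, hjl, hkm, hkl] using h
          · simpa [kd, hjl, hkm, hjm] using h
    refine Module.Basis.ext_elem b fun v => ?_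
    cases v with
    | E =>
      have h := hEcomp .E; simp only [schrMu] at h
      simpa [schr_repr_basis, Finsupp.add_apply, Finsupp.smul_apply, Finsupp.sub_apply] using (by linear_combination h / 2 :
        b.repr (φ (b (.S j k hjk))) .E = 0)
    | F =>
      have h := hEcomp .F; simp only [schrMu] at h
      simpa [schr_repr_basis, Finsupp.add_apply, Finsupp.smul_apply, Finsupp.sub_apply] using (by linear_combination -h / 2 :
        b.repr (φ (b (.S j k hjk))) .F = 0)
    | H => simpa [schr_repr_basis, Finsupp.add_apply, Finsupp.smul_apply, Finsupp.sub_apply] using hSH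
    | Z => simp [schr_repr_basis, Finsupp.add_apply, Finsupp.smul_apply]
    | X i =>
      have h := hEcomp (.X i); simp only [schrMu] at h
      simpa [schr_repr_basis, Finsupp.add_apply, Finsupp.smul_apply, Finsupp.sub_apply] using (by linear_combination h :
        b.repr (φ (b (.S j k hjk))) (.X i) = 0)
    | Y i =>
      have h := hEcomp (.Y i); simp only [schrMu] at h
      simpa [schr_repr_basis, Finsupp.add_apply, Finsupp.smul_apply, Finsupp.sub_apply] using (by linear_combination -h :
        b.repr (φ (b (.S j k hjk))) (.Y i) = 0)
    | S l m hlm =>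
      have h := hSS l m hlm
      simpa [schr_repr_basis, Finsupp.add_apply, Finsupp.smul_apply, Finsupp.sub_apply,
        Finsupp.single_apply, mul_ite, mul_one, mul_zero] using h
  have phiS : ∀ j k (hjk : j < k), φ (b (.S j k hjk)) = α • b (.S j k hjk) := by
    intro j k hjk
    obtain ⟨l, hlj, hlk⟩ : ∃ l : Fin n, l ≠ j ∧ l ≠ k := by
      by_contra hcon; push_neg at hcon
      have hall : ∀ l : Fin n, l = j ∨ l = k := fun l => by
        by_cases h : l = j
        · exact Or.inl h
        · exact Or.inr (hcon l h)
      have h0 := hall ⟨0, by omega⟩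
      have h1 := hall ⟨1, by omega⟩
      have h2 := hall ⟨2, by omega⟩
      rcases h0 with a | a <;> rcases h1 with c | c <;> rcases h2 with d | d <;>
        simp only [Fin.ext_iff] at a c d <;> omega
    have hbr : ⁅sg b j l, sg b l k⁆ = b (.S j k hjk) := by
      have h := hb.lie_s_s j l l k
      have k1 : kd l l = 1 := by simp [kd]
      have k2 : kd j k = 0 := by simp [kd, hjk.ne]
      have k3 : kd k l = 0 := by simp [kd, (hlk.symm : k ≠ l)]
      have k4 : kd l j = 0 := by simp [kd, hlj]
      rw [h, k1, k2, k3, k4, one_smul, zero_smul, zero_smul, zero_smul, add_zero, add_zero,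
        add_zero, sg_lt b hjk]
    have hsg : ∀ p q : Fin n, ∃ ζ : ℂ, φ (sg b p q) = α • sg b p q + ζ • b .Z := by
      intro p q
      rcases lt_trichotomy p q with h | h | h
      · exact ⟨_, by rw [sg_lt b h]; exact hSpart p q h⟩
      · subst h; exact ⟨0, by rw [sg_diag b]; simp⟩
      · refine ⟨-(b.repr (φ (b (.S q p h))) .Z), ?_⟩
        rw [sg_gt b h, map_neg]
        conv_lhs => rw [hSpart q p h]
        module
    obtain ⟨z1, hz1⟩ := hsg j l
    obtain ⟨z2, hz2⟩ := hsg l k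
    have h := hφ (sg b j l) (sg b l k)
    rw [hbr, hz1, hz2, add_lie, lie_add, smul_lie, lie_smul, smul_lie, lie_smul,
      lie_Z_any b hb, lie_any_Z b hb, hbr] at h
    rw [h]; module
  refine ⟨α, Module.Basis.ext b fun u => ?_⟩
  simp only [LinearMap.smul_apply, LinearMap.id_apply]
  cases u with
  | E => exact phiE
  | F => exact phiF
  | H => exact phiH
  | Z => exact phiZ
  | X i => exact phiX i
  | Y i => exact phiY i
  | S j k hjk => exact phiS j k hjk
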